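/- Topological ultraproducts of pseudofinite Hausdorff spaces are pseudofinite Hausdorff: if D is an ultrafilter on I and D-almost every X_i is a Hausdorff space with no infinite compact subsets, then ∏_D X_i is Hausdorff with no infinite compact subsets. -/

import Mathlib

open Filter Topology Set

universe u v

def USetoid {I : Type u} (D : Ultrafilter I) (X : I → Type v) : Setoid (∀ i, X i) where
  r x y := ∀ᶠ i in (D : Filter I), x i = y i
  iseqv := ⟨fun _ => Filter.Eventually.of_forall fun _ => rfl,
    fun h => h.mono fun _ e => e.symm,
    fun h₁ h₂ => (h₁.and h₂).mono fun _ e => e.1.trans e.2⟩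

def Uprod {I : Type u} (D : Ultrafilter I) (X : I → Type v) := Quotient (USetoid D X)

def ultrabox {I : Type u} (D : Ultrafilter I) (X : I → Type v) (U : ∀ i, Set (X i)) :
    Set (Uprod D X) :=
  {q | ∃ x : ∀ i, X i, Quotient.mk (USetoid D X) x = q ∧ {i | x i ∈ U i} ∈ D}

def uTop {I : Type u} (D : Ultrafilter I) (X : I → Type v) [∀ i, TopologicalSpace (X i)] :
    TopologicalSpace (Uprod D X) :=
  TopologicalSpace.generateFrom
    {s | ∃ U : ∀ i, Set (X i), (∀ i, IsOpen (U i)) ∧ s = ultrabox D X U}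

section Aux
variable {I : Type u} (D : Ultrafilter I) (X : I → Type v)

/-- abbreviation for the quotient map -/
def umk (x : ∀ i, X i) : Uprod D X := Quotient.mk (USetoid D X) x

variable {D X}

lemma umk_eq_umk {x y : ∀ i, X i} :
    umk D X x = umk D X y ↔ {i | x i = y i} ∈ D :=
  ⟨fun h => Quotient.exact h, fun h => Quotient.sound h⟩

lemma mem_ultrabox {U : ∀ i, Set (X i)} {x : ∀ i, X i} :
    umk D X x ∈ ultrabox D X U ↔ {i | x i ∈ U i} ∈ D := by
  constructor
  · rintro ⟨y, hy, hyU⟩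
    have hxy : {i | y i = x i} ∈ D := Quotient.exact hy
    filter_upwards [hxy, hyU] with i h1 h2
    rwa [h1] at h2
  · intro hx
    exact ⟨x, rfl, hx⟩

lemma umk_out (q : Uprod D X) : umk D X (Quotient.out q) = q := Quotient.out_eq q

end Aux

section Aux2
variable {I : Type u} {D : Ultrafilter I} {X : I → Type v} [∀ i, TopologicalSpace (X i)]

lemma isOpen_ultrabox {U : ∀ i, Set (X i)} (hU : ∀ i, IsOpen (U i)) :
    IsOpen[uTop D X] (ultrabox D X U) :=
  TopologicalSpace.GenerateOpen.basic _ ⟨U, hU, rfl⟩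

lemma exists_ultrabox_subset {O : Set (Uprod D X)} (hO : IsOpen[uTop D X] O) :
    ∀ q ∈ O, ∃ U : ∀ i, Set (X i),
      (∀ i, IsOpen (U i)) ∧ q ∈ ultrabox D X U ∧ ultrabox D X U ⊆ O := by
  change TopologicalSpace.GenerateOpen _ O at hO
  induction hO with
  | basic s hs =>
    obtain ⟨U, hU, rfl⟩ := hs
    exact fun q hq => ⟨U, hU, hq, subset_rfl⟩
  | univ =>
    intro q _
    refine ⟨fun _ => univ, fun _ => isOpen_univ, ?_, subset_rfl.trans (subset_univ _)⟩
    obtain ⟨x, hx⟩ : ∃ x, umk D X x = q := ⟨Quotient.out q, umk_out q⟩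
    subst hx
    rw [mem_ultrabox]
    exact Filter.univ_mem' fun i => mem_univ _
  | inter s t _ _ ihs iht =>
    intro q hq
    obtain ⟨U, hU, hqU, hUs⟩ := ihs q hq.1
    obtain ⟨V, hV, hqV, hVt⟩ := iht q hq.2
    refine ⟨fun i => U i ∩ V i, fun i => (hU i).inter (hV i), ?_, ?_⟩
    · obtain ⟨x, hx⟩ : ∃ x, umk D X x = q := ⟨Quotient.out q, umk_out q⟩
      subst hx
      rw [mem_ultrabox] at hqU hqV ⊢
      filter_upwards [hqU, hqV] with i h1 h2 using ⟨h1, h2⟩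
    · intro z hz
      obtain ⟨y, rfl, hy⟩ := hz
      have h1 : (umk D X y : Uprod D X) ∈ ultrabox D X U := by
        rw [mem_ultrabox]; filter_upwards [hy] with i hi using hi.1
      have h2 : (umk D X y : Uprod D X) ∈ ultrabox D X V := by
        rw [mem_ultrabox]; filter_upwards [hy] with i hi using hi.2
      exact ⟨hUs h1, hVt h2⟩
  | sUnion S _ ih =>
    intro q hq
    obtain ⟨s, hsS, hqs⟩ := hq
    obtain ⟨U, hU, hqU, hUs⟩ := ih s hsS q hqs
    exact ⟨U, hU, hqU, hUs.trans (subset_sUnion_of_mem hsS)⟩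

end Aux2

open Filter Topology Set


lemma isCompact_of_sUnion_cover {α : Type u} [TopologicalSpace α] {s : Set α}
    (h : ∀ 𝒲 : Set (Set α), (∀ w ∈ 𝒲, IsOpen w) → s ⊆ ⋃₀ 𝒲 →
      ∃ G ⊆ 𝒲, G.Finite ∧ s ⊆ ⋃₀ G) : IsCompact s := by
  classical
  refine isCompact_of_finite_subcover fun {ι} U hU hcov => ?_
  obtain ⟨G, hG𝒲, hGfin, hGcov⟩ := h (Set.range U)
    (by rintro w ⟨i, rfl⟩; exact hU i)
    (by rwa [Set.sUnion_range])
  have hidx : ∀ w : {x // x ∈ hGfin.toFinset}, ∃ i, U i = w.1 := fun w =>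
    hG𝒲 (hGfin.mem_toFinset.mp w.2)
  refine ⟨hGfin.toFinset.attach.image fun w => (hidx w).choose, fun x hx => ?_⟩
  obtain ⟨w, hwG, hxw⟩ := hGcov hx
  have hw' : w ∈ hGfin.toFinset := hGfin.mem_toFinset.mpr hwG
  refine Set.mem_biUnion (Finset.mem_image.mpr ⟨⟨w, hw'⟩, Finset.mem_attach _ _, rfl⟩) ?_
  rw [(hidx ⟨w, hw'⟩).choose_spec]
  exact hxw

lemma exists_bad_sUnion_cover {α : Type u} [TopologicalSpace α] {s : Set α}
    (hs : ¬ IsCompact s) : ∃ 𝒲 : Set (Set α), (∀ w ∈ 𝒲, IsOpen w) ∧ s ⊆ ⋃₀ 𝒲 ∧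
      ∀ G ⊆ 𝒲, G.Finite → ¬ s ⊆ ⋃₀ G := by
  by_contra hcon
  push_neg at hcon
  exact hs (isCompact_of_sUnion_cover fun 𝒲 h1 h2 => by
    obtain ⟨G, hG1, hG2, hG3⟩ := hcon 𝒲 h1 h2
    exact ⟨G, hG1, hG2, hG3⟩)

lemma ultrafilter_countable_partition {I : Type u} {D : Ultrafilter I}
    (H : ∀ f : ℕ → Set I, (∀ n, f n ∈ D) → (⋂ n, f n) ∈ D)
    (g : I → ℕ) : ∃ n, {i | g i = n} ∈ D := by
  by_contra hc
  push_neg at hc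
  have h1 : ∀ n, {i | g i = n}ᶜ ∈ D := fun n =>
    Ultrafilter.compl_mem_iff_notMem.mpr (hc n)
  have h2 := H _ h1
  have h3 : (⋂ n, {i | g i = n}ᶜ) = (∅ : Set I) := by
    ext i
    simp only [Set.mem_iInter, Set.mem_compl_iff, Set.mem_setOf_eq, Set.mem_empty_iff_false,
      iff_false, not_forall, not_not]
    exact ⟨g i, rfl⟩
  rw [h3] at h2
  exact (Filter.empty_notMem (D : Filter I)) h2


section T2
variable {I : Type u} {D : Ultrafilter I} {X : I → Type v} [∀ i, TopologicalSpace (X i)]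

lemma t2_uprod (h : {i | T2Space (X i) ∧ ∀ K : Set (X i), IsCompact K → K.Finite} ∈ D) :
    @T2Space (Uprod D X) (uTop D X) := by
  classical
  letI := uTop D X
  refine ⟨fun q q' hne => ?_⟩
  obtain ⟨x, hx⟩ : ∃ x, umk D X x = q := ⟨Quotient.out q, umk_out q⟩
  obtain ⟨y, hy⟩ : ∃ y, umk D X y = q' := ⟨Quotient.out q', umk_out q'⟩
  subst hx hy
  have hne' : {i | x i = y i} ∉ D := fun hc => hne (umk_eq_umk.mpr hc)
  have hN : {i | x i ≠ y i} ∈ D := Ultrafilter.compl_mem_iff_notMem.mpr hne'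
  set A : Set I := {i | x i ≠ y i} ∩ {i | T2Space (X i) ∧ ∀ K : Set (X i), IsCompact K → K.Finite}
    with hA
  have hAD : A ∈ D := Filter.inter_mem hN h
  have hsep : ∀ i, ∃ UV : Set (X i) × Set (X i),
      i ∈ A → (IsOpen UV.1 ∧ IsOpen UV.2 ∧ x i ∈ UV.1 ∧ y i ∈ UV.2 ∧ Disjoint UV.1 UV.2) := by
    intro i
    by_cases hi : i ∈ A
    · haveI : T2Space (X i) := hi.2.1
      obtain ⟨u, v, hu, hv, hxu, hyv, huv⟩ := t2_separation hi.1
      exact ⟨(u, v), fun _ => ⟨hu, hv, hxu, hyv, huv⟩⟩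
    · exact ⟨(∅, ∅), fun hc => absurd hc hi⟩
  choose UV hUV using hsep
  classical
  refine ⟨ultrabox D X (fun i => if i ∈ A then (UV i).1 else univ),
    ultrabox D X (fun i => if i ∈ A then (UV i).2 else univ), ?_, ?_, ?_, ?_, ?_⟩
  · exact isOpen_ultrabox fun i => by
      by_cases hi : i ∈ A <;> simp only [hi, if_true, if_false] <;>
        first | exact (hUV i hi).1 | exact isOpen_univ
  · exact isOpen_ultrabox fun i => by
      by_cases hi : i ∈ A <;> simp only [hi, if_true, if_false] <;>
        first | exact (hUV i hi).2.1 | exact isOpen_univ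
  · rw [mem_ultrabox]
    filter_upwards [hAD] with i hi
    simp only [hi, if_true]
    exact (hUV i hi).2.2.1
  · rw [mem_ultrabox]
    filter_upwards [hAD] with i hi
    simp only [hi, if_true]
    exact (hUV i hi).2.2.2.1
  · rw [Set.disjoint_left]
    rintro z ⟨zx, hzx, hzxU⟩ ⟨zy, hzy, hzyV⟩
    have hzz : {i | zx i = zy i} ∈ D := Quotient.exact (hzx.trans hzy.symm)
    have : A ∩ ({i | zx i = zy i} ∩ ({i | zx i ∈ _} ∩ {i | zy i ∈ _})) ∈ D :=
      Filter.inter_mem hAD (Filter.inter_mem hzz (Filter.inter_mem hzxU hzyV))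
    obtain ⟨i, hiA, hieq, hiU, hiV⟩ := Filter.nonempty_of_mem this
    simp only [Set.mem_setOf_eq, hiA, if_true] at hiU hiV
    rw [hieq] at hiU
    exact ((hUV i hiA).2.2.2.2).le_bot ⟨hiU, hiV⟩

end T2

section Pcase
variable {I : Type u} {D : Ultrafilter I} {X : I → Type v} [∀ i, TopologicalSpace (X i)]

lemma uprod_P (hH : ¬ ∀ f : ℕ → Set I, (∀ n, f n ∈ D) → (⋂ n, f n) ∈ D)
    {O : ℕ → Set (Uprod D X)} (hOopen : ∀ n, IsOpen[uTop D X] (O n))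
    (q : Uprod D X) (hq : ∀ n, q ∈ O n) :
    ∃ W, IsOpen[uTop D X] W ∧ q ∈ W ∧ ∀ n, W ⊆ O n := by
  classical
  push_neg at hH
  obtain ⟨f, hf, hfI⟩ := hH
  obtain ⟨b, hb⟩ : ∃ b, umk D X b = q := ⟨Quotient.out q, umk_out q⟩
  subst hb
  have hbox : ∀ n, ∃ U : ∀ i, Set (X i),
      (∀ i, IsOpen (U i)) ∧ umk D X b ∈ ultrabox D X U ∧ ultrabox D X U ⊆ O n := fun n =>
    exists_ultrabox_subset (hOopen n) _ (hq n)
  choose U hUopen hqU hUsub using hbox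
  have hH' : ∀ n, {i | b i ∈ U n i} ∈ D := fun n => mem_ultrabox.mp (hqU n)
  set K : ℕ → Set I := fun n =>
    ((⋂ m, f m)ᶜ ∩ ⋂ k ∈ Finset.range (n + 1), f k) ∩ ⋂ k ∈ Finset.range (n + 1), {i | b i ∈ U k i}
    with hK
  have hKD : ∀ n, K n ∈ D := by
    intro n
    refine Filter.inter_mem (Filter.inter_mem (Ultrafilter.compl_mem_iff_notMem.mpr hfI) ?_) ?_
    · exact (Filter.biInter_mem (Finset.range (n + 1)).finite_toSet).mpr fun k _ => hf k
    · exact (Filter.biInter_mem (Finset.range (n + 1)).finite_toSet).mpr fun k _ => hH' k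
  have hKanti : ∀ {m n : ℕ}, m ≤ n → K n ⊆ K m := by
    intro m n hmn i hi
    obtain ⟨⟨h1, h2⟩, h3⟩ := hi
    refine ⟨⟨h1, ?_⟩, ?_⟩ <;> rw [Set.mem_iInter₂] at * <;>
      exact fun k hk => (by first
        | exact h2 k (Finset.mem_range.mpr ((Finset.mem_range.mp hk).trans_le (Nat.succ_le_succ hmn)))
        | exact h3 k (Finset.mem_range.mpr ((Finset.mem_range.mp hk).trans_le (Nat.succ_le_succ hmn))))
  have hex : ∀ i, ∃ n, i ∉ K n := by
    intro i
    by_contra hc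
    push_neg at hc
    have h1 : i ∈ (⋂ m, f m)ᶜ := (hc 0).1.1
    have h2 : i ∈ ⋂ m, f m := Set.mem_iInter.mpr fun m =>
      Set.mem_iInter₂.mp (hc m).1.2 m (Finset.mem_range.mpr (Nat.lt_succ_self m))
    exact h1 h2
  set ρ : I → ℕ := fun i => Nat.find (hex i) with hρ
  set V : ∀ i, Set (X i) := fun i => ⋂ k ∈ Finset.range (ρ i), U k i with hV
  have hVopen : ∀ i, IsOpen (V i) := fun i =>
    isOpen_biInter_finset fun k _ => hUopen k i
  refine ⟨ultrabox D X V, isOpen_ultrabox hVopen, ?_, ?_⟩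
  · rw [mem_ultrabox]
    refine Filter.univ_mem' fun i => ?_
    simp only [hV, Set.mem_setOf_eq, Set.mem_iInter]
    intro k hk
    have : i ∈ K k := not_not.mp (Nat.find_min (hex i) (Finset.mem_range.mp hk))
    exact Set.mem_iInter₂.mp this.2 k (Finset.mem_range.mpr (Nat.lt_succ_self k))
  · intro n z hz
    obtain ⟨y, rfl, hy⟩ := hz
    refine hUsub n (show umk D X y ∈ ultrabox D X (U n) from ?_)
    rw [mem_ultrabox]
    filter_upwards [hy, hKD n] with i h1 h2
    have hρi : n < ρ i := by
      by_contra hc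
      push_neg at hc
      exact Nat.find_spec (hex i) (hKanti hc h2)
    exact Set.mem_iInter₂.mp h1 n (Finset.mem_range.mpr hρi)

end Pcase


/-- Topological ultraproducts of pseudofinite Hausdorff spaces are pseudofinite
Hausdorff: if D-almost every `X i` is Hausdorff with no infinite compact
subsets, then `∏_D X i` is Hausdorff with no infinite compact subsets. -/
theorem ultraproduct_pseudofinite_hausdorff {I : Type u} (D : Ultrafilter I)
    (X : I → Type u) [∀ i, TopologicalSpace (X i)]
    (h : {i | T2Space (X i) ∧ ∀ K : Set (X i), IsCompact K → K.Finite} ∈ D) :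
    letI := uTop D X
    T2Space (Uprod D X) ∧ ∀ K : Set (Uprod D X), IsCompact K → K.Finite := by
  classical
  letI := uTop D X
  haveI hT2 : T2Space (Uprod D X) := t2_uprod h
  refine ⟨hT2, ?_⟩
  intro K hK
  by_contra hfin
  have hinf : K.Infinite := hfin
  set e : ℕ ↪ K := Set.Infinite.natEmbedding K hinf with he
  set q : ℕ → Uprod D X := fun n => (e n : Uprod D X) with hq
  have hqK : ∀ n, q n ∈ K := fun n => (e n).2
  have hqinj : Function.Injective q := fun n m hnm => e.injective (Subtype.ext hnm)
  by_cases H : ∀ f : ℕ → Set I, (∀ n, f n ∈ D) → (⋂ n, f n) ∈ D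
  · -- countably complete case
    set a : ℕ → ∀ i, X i := fun n => Quotient.out (q n) with ha'
    have ha : ∀ n, umk D X (a n) = q n := fun n => umk_out _
    have hdist : ∀ n m, n ≠ m → {i | a n i ≠ a m i} ∈ D := by
      intro n m hnm
      have hne : {i | a n i = a m i} ∉ D := fun hc =>
        hqinj.ne hnm (by rw [← ha n, ← ha m]; exact umk_eq_umk.mpr hc)
      exact Ultrafilter.compl_mem_iff_notMem.mpr hne
    set Cd : Set I := ⋂ n, ⋂ m, {i | n ≠ m → a n i ≠ a m i} with hCd'
    have hCdD : Cd ∈ D := by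
      refine H _ fun n => H _ fun m => ?_
      by_cases hnm : n = m
      · exact Filter.univ_mem' fun i hi => absurd hnm hi
      · filter_upwards [hdist n m hnm] with i hi using fun _ => hi
    set C : Set I :=
      {i | T2Space (X i) ∧ ∀ K : Set (X i), IsCompact K → K.Finite} ∩ Cd with hC'
    have hC : C ∈ D := Filter.inter_mem h hCdD
    set Yi : ∀ i, Set (X i) := fun i => closure (Set.range fun n => a n i) with hYi'
    have hnc : ∀ i ∈ C, ¬ IsCompact (Yi i) := by
      intro i hi hcomp
      have hfin2 : (Yi i).Finite := hi.1.2 _ hcomp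
      have hinj : Function.Injective (fun n => a n i) := by
        intro n m hnm
        by_contra hne
        exact absurd hnm ((Set.mem_iInter.mp (Set.mem_iInter.mp hi.2 n) m) hne)
      exact Set.infinite_range_of_injective hinj (hfin2.subset subset_closure)
    have hcovex : ∀ i, ∃ 𝒲 : Set (Set (X i)), (∀ w ∈ 𝒲, IsOpen w) ∧
        (i ∈ C → (Yi i ⊆ ⋃₀ 𝒲 ∧ ∀ G ⊆ 𝒲, G.Finite → ¬ Yi i ⊆ ⋃₀ G)) ∧
        (i ∉ C → Set.univ ∈ 𝒲) := by
      intro i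
      by_cases hi : i ∈ C
      · obtain ⟨𝒲, h1, h2, h3⟩ := exists_bad_sUnion_cover (hnc i hi)
        exact ⟨𝒲, h1, fun _ => ⟨h2, h3⟩, fun hc => absurd hi hc⟩
      · exact ⟨{Set.univ}, fun w hw => by rw [Set.mem_singleton_iff] at hw; exact hw ▸ isOpen_univ,
          fun hc => absurd hc hi, fun _ => Set.mem_singleton _⟩
    choose 𝒲 h𝒲open h𝒲C h𝒲univ using hcovex
    set 𝒲' : ∀ i, Set (Set (X i)) := fun i => 𝒲 i ∪ {(Yi i)ᶜ} with h𝒲''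
    have h𝒲'open : ∀ i, ∀ w ∈ 𝒲' i, IsOpen w := by
      rintro i w (hw | hw)
      · exact h𝒲open i w hw
      · rw [Set.mem_singleton_iff] at hw
        exact hw ▸ isClosed_closure.isOpen_compl
    have htotal : ∀ i (x : X i), ∃ w ∈ 𝒲' i, x ∈ w := by
      intro i x
      by_cases hi : i ∈ C
      · by_cases hx : x ∈ Yi i
        · obtain ⟨w, hw, hxw⟩ := (h𝒲C i hi).1 hx
          exact ⟨w, Or.inl hw, hxw⟩
        · exact ⟨(Yi i)ᶜ, Or.inr rfl, hx⟩
      · exact ⟨Set.univ, Or.inl (h𝒲univ i hi), Set.mem_univ x⟩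
    set Ufam : {f : ∀ i, Set (X i) // ∀ i, f i ∈ 𝒲' i} → Set (Uprod D X) :=
      fun f => ultrabox D X f.1 with hUfam'
    have hUfamopen : ∀ f, IsOpen (Ufam f) := fun f =>
      isOpen_ultrabox fun i => h𝒲'open i _ (f.2 i)
    have hUfamcov : K ⊆ ⋃ f, Ufam f := by
      intro z _
      obtain ⟨bz, hbz⟩ : ∃ b, umk D X b = z := ⟨Quotient.out z, umk_out z⟩
      choose w hw1 hw2 using fun i => htotal i (bz i)
      refine Set.mem_iUnion.mpr ⟨⟨w, hw1⟩, ?_⟩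
      rw [← hbz]
      exact mem_ultrabox.mpr (Filter.univ_mem' hw2)
    obtain ⟨t, ht⟩ := hK.elim_finite_subcover Ufam hUfamopen hUfamcov
    set fam : ∀ i, Set (Set (X i)) := fun i => (fun f => (f : {f : ∀ i, Set (X i) // ∀ i, f i ∈ 𝒲' i}).1 i) '' (t : Set _) with hfam'
    have hfamfin : ∀ i, (fam i).Finite := fun i => t.finite_toSet.image _
    have hfam𝒲' : ∀ i, fam i ⊆ 𝒲' i := by
      rintro i w ⟨f, _, he⟩
      exact he ▸ f.2 i
    have claimA : {i | Yi i ⊆ ⋃₀ fam i} ∈ D := by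
      by_contra hA
      have hE : C ∩ {i | Yi i ⊆ ⋃₀ fam i}ᶜ ∈ D :=
        Filter.inter_mem hC (Ultrafilter.compl_mem_iff_notMem.mpr hA)
      set E := C ∩ {i | Yi i ⊆ ⋃₀ fam i}ᶜ with hE'
      have hbex : ∀ i, ∃ x : X i, i ∈ E → (x ∈ Yi i ∧ x ∉ ⋃₀ fam i) := by
        intro i
        by_cases hi : i ∈ E
        · obtain ⟨x, hx1, hx2⟩ := Set.not_subset.mp hi.2
          exact ⟨x, fun _ => ⟨hx1, hx2⟩⟩
        · exact ⟨a 0 i, fun hc => absurd hc hi⟩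
      choose b hb using hbex
      have hbcl : umk D X b ∈ closure (Set.range q) := by
        rw [mem_closure_iff]
        intro O hO hbO
        obtain ⟨V, hVopen, hbV, hVsub⟩ := exists_ultrabox_subset hO _ hbO
        have hbV' := mem_ultrabox.mp hbV
        set g : I → ℕ := fun i => if hgi : ∃ n, a n i ∈ V i then hgi.choose else 0 with hg'
        obtain ⟨n₀, hn₀⟩ := ultrafilter_countable_partition H g
        have hsub : {i | g i = n₀} ∩ (E ∩ {i | b i ∈ V i}) ⊆ {i | a n₀ i ∈ V i} := by
          rintro i ⟨hgi, hiE, hibV⟩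
          have hbY : b i ∈ Yi i := (hb i hiE).1
          have hex2 : ∃ n, a n i ∈ V i := by
            obtain ⟨x, hxV, n, hxn⟩ := mem_closure_iff.mp hbY (V i) (hVopen i) hibV
            refine ⟨n, ?_⟩
            show a n i ∈ V i
            rw [show a n i = x from hxn]
            exact hxV
          have hgi' : g i = hex2.choose := by simp only [hg', dif_pos hex2]
          have : hex2.choose = n₀ := by rw [← hgi']; exact hgi
          exact this ▸ hex2.choose_spec
        have hmem : {i | a n₀ i ∈ V i} ∈ D :=
          Filter.mem_of_superset (Filter.inter_mem hn₀ (Filter.inter_mem hE hbV')) hsub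
        exact ⟨q n₀, hVsub (by rw [← ha n₀]; exact mem_ultrabox.mpr hmem), ⟨n₀, rfl⟩⟩
      have hbK : umk D X b ∈ K := by
        have hrsub : Set.range q ⊆ K := by rintro z ⟨n, rfl⟩; exact hqK n
        exact closure_minimal hrsub hK.isClosed hbcl
      obtain ⟨f, hft, hbf⟩ := Set.mem_iUnion₂.mp (ht hbK)
      have hbf' := mem_ultrabox.mp hbf
      obtain ⟨i, hiE, hibf⟩ := Filter.nonempty_of_mem (Filter.inter_mem hE hbf')
      exact (hb i hiE).2 ⟨f.1 i, ⟨f, hft, rfl⟩, hibf⟩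
    obtain ⟨i, hiC, hicov⟩ := Filter.nonempty_of_mem (Filter.inter_mem hC claimA)
    refine (h𝒲C i hiC).2 (fam i ∩ 𝒲 i) Set.inter_subset_right
      ((hfamfin i).inter_of_left _) ?_
    intro x hx
    obtain ⟨w, hwfam, hxw⟩ := hicov hx
    rcases hfam𝒲' i hwfam with hw | hw
    · exact ⟨w, ⟨hwfam, hw⟩, hxw⟩
    · rw [Set.mem_singleton_iff] at hw
      rw [hw] at hxw
      exact absurd hx hxw
  · -- countably incomplete case
    have hacc : ∃ r ∈ K, ∀ O : Set (Uprod D X), IsOpen O → r ∈ O → {n | q n ∈ O}.Infinite := by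
      by_contra hc
      push_neg at hc
      have hc' : ∀ r : K, ∃ O : Set (Uprod D X),
          IsOpen O ∧ (r : Uprod D X) ∈ O ∧ {n | q n ∈ O}.Finite := by
        intro r
        obtain ⟨O, hO1, hO2, hO3⟩ := hc r r.2
        exact ⟨O, hO1, hO2, hO3⟩
      choose O hO1 hO2 hO3 using hc'
      have hcov : K ⊆ ⋃ r : K, O r := fun z hz => Set.mem_iUnion.mpr ⟨⟨z, hz⟩, hO2 _⟩
      obtain ⟨t, ht⟩ := hK.elim_finite_subcover O hO1 hcov
      have hsub : (Set.univ : Set ℕ) ⊆ ⋃ r ∈ t, {n | q n ∈ O r} := by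
        intro n _
        obtain ⟨r, hrt, hnr⟩ := Set.mem_iUnion₂.mp (ht (hqK n))
        exact Set.mem_biUnion hrt hnr
      exact Set.infinite_univ ((t.finite_toSet.biUnion fun r _ => hO3 r).subset hsub)
    obtain ⟨r, hrK, hr⟩ := hacc
    set O : ℕ → Set (Uprod D X) := fun n => if q n = r then Set.univ else {q n}ᶜ with hO'
    have hOopen : ∀ n, IsOpen (O n) := by
      intro n
      by_cases hn : q n = r
      · simp only [hO', hn, if_pos rfl]; exact isOpen_univ
      · simp only [hO', if_neg hn]; exact isClosed_singleton.isOpen_compl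
    have hrO : ∀ n, r ∈ O n := by
      intro n
      by_cases hn : q n = r
      · simp only [hO', hn, if_pos rfl]; exact Set.mem_univ r
      · simp only [hO', if_neg hn]
        exact fun hc2 => hn (Set.mem_singleton_iff.mp hc2).symm
    obtain ⟨W, hWopen, hrW, hWsub⟩ := uprod_P H hOopen r hrO
    have hWinf := hr W hWopen hrW
    have hsub : {n | q n ∈ W} ⊆ {n | q n = r} := by
      intro n hn
      have h2 := hWsub n hn
      simp only [hO'] at h2
      split_ifs at h2 with hcase
      · exact hcase
      · exact absurd rfl h2
    refine hWinf (Set.Finite.subset ?_ hsub)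
    have : {n | q n = r}.Subsingleton := fun n hn m hm => hqinj (hn.trans hm.symm)
    exact this.finite
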